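/- Inductive step of the determinization bound: suppose at time T every action satisfies C_T(a)/T − f(a) ≤ (1+b(T))/T for a nonnegative nondecreasing b, and the policy chooses an action a* with C_T(a*)/T − f(a*) ≤ b(T)/T, incrementing only C(a*). Then at time T+1, every action a satisfies C_{T+1}(a)/(T+1) − f(a) ≤ (1+b(T+1))/(T+1). -/

import Mathlib

/-- Inductive step of the determinization bound: if at time T every action
satisfies C_T(a)/T − f(a) ≤ (1+b(T))/T with b nonnegative nondecreasing,
and the chosen action a* satisfies C_T(a*)/T − f(a*) ≤ b(T)/T, then after
incrementing C(a*), every action satisfies the bound at time T+1. -/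
theorem stmt_9 (A : Type*) [Fintype A] [DecidableEq A]
    (f : A → ℝ) (hf0 : ∀ a, 0 ≤ f a) (hf1 : ∑ a, f a = 1)
    (b : ℕ → ℝ) (hb0 : ∀ t, 0 ≤ b t) (hbmono : Monotone b)
    (T : ℕ) (hT : 1 ≤ T)
    (C : A → ℕ) (hsum : ∑ a, C a = T)
    (hbound : ∀ a, (C a : ℝ) / T - f a ≤ (1 + b T) / T)
    (astar : A) (hchoice : (C astar : ℝ) / T - f astar ≤ b T / T) :
    ∀ a, ((Function.update C astar (C astar + 1)) a : ℝ) / (T + 1) - f a ≤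
      (1 + b (T + 1)) / (T + 1) := by
  intro a
  have hTpos : (0:ℝ) < T := by exact_mod_cast Nat.lt_of_lt_of_le Nat.zero_lt_one hT
  have hT1pos : (0:ℝ) < (T:ℝ) + 1 := by linarith
  have hbb : b T ≤ b (T + 1) := hbmono (Nat.le_succ T)
  -- reduce to a multiplied inequality
  have key : ∀ n : ℕ, (n:ℝ) ≤ f a * ((T:ℝ)+1) + 1 + b (T+1) →
      (n : ℝ) / (T + 1) - f a ≤ (1 + b (T + 1)) / (T + 1) := by
    intro n hn
    rw [div_sub' (ne_of_gt hT1pos), div_le_div_iff₀ hT1pos hT1pos]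
    nlinarith
  by_cases h : a = astar
  · subst h
    have h1 : (C a : ℝ) ≤ f a * T + b T := by
      have := hchoice
      rw [div_sub' (ne_of_gt hTpos), div_le_div_iff₀ hTpos hTpos] at this
      nlinarith
    have : ((C a + 1 : ℕ) : ℝ) ≤ f a * ((T:ℝ)+1) + 1 + b (T+1) := by
      push_cast
      have := hf0 a
      nlinarith
    simpa [Function.update] using key _ this
  · have h1 : (C a : ℝ) ≤ f a * T + 1 + b T := by
      have := hbound a
      rw [div_sub' (ne_of_gt hTpos), div_le_div_iff₀ hTpos hTpos] at this
      nlinarith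
    have h2 : ((C a : ℕ) : ℝ) ≤ f a * ((T:ℝ)+1) + 1 + b (T+1) := by
      have := hf0 a
      nlinarith
    simpa [Function.update, h] using key _ h2
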